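/- Let m ≥ 1 and 0 ≤ k ≤ m be integers and let A(q,x) = Π_{i=1}^m (q^i x + [i]_q) ∈ ℤ[q,x]. Then the coefficient of x^k in A(q,x) is a nonzero polynomial in q with q_max([x^k]A) = m(m−1)/2 + k and q_min([x^k]A) = k(k+1)/2. -/

import Mathlib

open Finset Polynomial LaurentPolynomial

attribute [local instance] Classical.propDecidable

/-- The value `π_i` of the word of `π` at the 1-based position `i` (values in `{1, …, m}`). -/
def wordAt (m : ℕ) (π : Equiv.Perm (Fin m)) (i : ℕ) : ℕ :=
  if h : i - 1 < m then ((π ⟨i - 1, h⟩ : Fin m) : ℕ) + 1 else 0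

/-- The descent set `Des(π) ⊆ {1, …, m-1}` (1-based positions). -/
def DesSet (m : ℕ) (π : Equiv.Perm (Fin m)) : Finset ℕ :=
  (Finset.Ico 1 m).filter fun i => wordAt m π (i + 1) < wordAt m π i

/-- The number of descents `des(π)`. -/
def desNum (m : ℕ) (π : Equiv.Perm (Fin m)) : ℕ := (DesSet m π).card

/-- The major index `maj(π)`. -/
def majIdx (m : ℕ) (π : Equiv.Perm (Fin m)) : ℕ := ∑ i ∈ DesSet m π, i

/-- The partial order `P` on `{1,…,m}` (encoded as `Fin m`) is naturally labeled:
`x ≤_P y` implies `x ≤ y` as integers. -/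
def NatLabeled (m : ℕ) (P : PartialOrder (Fin m)) : Prop :=
  ∀ x y : Fin m, P.le x y → x ≤ y

/-- `π` is a linear extension of `P`: `π_i ≤_P π_j` implies `i ≤ j`. -/
def IsLinExt (m : ℕ) (P : PartialOrder (Fin m)) (π : Equiv.Perm (Fin m)) : Prop :=
  ∀ i j : Fin m, P.le (π i) (π j) → i ≤ j

/-- `mc(x)`: the maximum number of elements of a chain of `P` whose largest element is `x`. -/
noncomputable def mc (m : ℕ) (P : PartialOrder (Fin m)) (x : Fin m) : ℕ :=
  sSup {k : ℕ | ∃ s : Finset (Fin m),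
    s.card = k ∧ IsChain P.le ↑s ∧ x ∈ s ∧ ∀ y ∈ s, P.le y x}

/-- `m̄c(x)`: the maximum number of elements of a chain of `P` whose smallest element is `x`. -/
noncomputable def mcUp (m : ℕ) (P : PartialOrder (Fin m)) (x : Fin m) : ℕ :=
  sSup {k : ℕ | ∃ s : Finset (Fin m),
    s.card = k ∧ IsChain P.le ↑s ∧ x ∈ s ∧ ∀ y ∈ s, P.le x y}

/-- The `q`-integer `[n]_q` for `n ∈ ℤ`, as a Laurent polynomial:
`[n]_q = 1 + q + ⋯ + q^{n-1}` for `n ≥ 0` and `[-n]_q = -q^{-n} [n]_q`. -/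
noncomputable def qInt (n : ℤ) : LaurentPolynomial ℤ :=
  if 0 ≤ n then ∑ i ∈ Finset.range n.toNat, T (i : ℤ)
  else -(T n * ∑ i ∈ Finset.range (-n).toNat, T (i : ℤ))

/-- The polynomial `F_P(q,x) = Σ_{π ∈ L(P)} q^{maj π} Π_{i=1}^m ([i - des π]_q + q^{i - des π} x)`,
an element of `(ℤ[q,q⁻¹])[x]` (it in fact lies in `ℤ[q,x]`). -/
noncomputable def Fpoly (m : ℕ) (P : PartialOrder (Fin m)) : Polynomial (LaurentPolynomial ℤ) :=
  ∑ π ∈ Finset.univ.filter (fun π => IsLinExt m P π),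
    Polynomial.C (T (majIdx m π : ℤ)) *
      ∏ i ∈ Finset.Icc 1 m,
        (Polynomial.C (qInt ((i : ℤ) - desNum m π)) +
          Polynomial.C (T ((i : ℤ) - desNum m π)) * Polynomial.X)

/-- The Newton polygon of an element of `(ℤ[q,q⁻¹])[x]`, in the `(q,x)`-plane. -/
noncomputable def NTL (f : Polynomial (LaurentPolynomial ℤ)) : Set (ℝ × ℝ) :=
  convexHull ℝ {p : ℝ × ℝ | ∃ (i : ℤ) (k : ℕ), (f.coeff k).coeff i ≠ 0 ∧ p = ((i : ℝ), (k : ℝ))}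

/-- The Newton polygon of an element of `ℤ[q][x]`, in the `(q,x)`-plane. -/
noncomputable def NTP (f : Polynomial (Polynomial ℤ)) : Set (ℝ × ℝ) :=
  convexHull ℝ {p : ℝ × ℝ | ∃ (i k : ℕ), (f.coeff k).coeff i ≠ 0 ∧ p = ((i : ℝ), (k : ℝ))}

/-- The polygon `C(a_1,…,a_m;h)`: the convex hull of `(0,0)`, `(a_1+⋯+a_i, i)` for
`1 ≤ i ≤ m`, `(h,m)` and `(h-m,0)`. -/
noncomputable def Cpolygon (m : ℕ) (a : ℕ → ℕ) (h : ℕ) : Set (ℝ × ℝ) :=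
  convexHull ℝ ({((0 : ℝ), (0 : ℝ)), ((h : ℝ), (m : ℝ)), ((h : ℝ) - (m : ℝ), (0 : ℝ))} ∪
    {p : ℝ × ℝ | ∃ i ∈ Finset.Icc 1 m, p = ((∑ j ∈ Finset.Icc 1 i, (a j : ℝ)), (i : ℝ))})

/-- The index of the descent block of `π` containing the 1-based position `j`. -/
def blockIdx (m : ℕ) (π : Equiv.Perm (Fin m)) (j : ℕ) : ℕ :=
  1 + ((Finset.Ico 1 j).filter (fun i => i ∉ DesSet m π)).card

/-- `DB_i(π)`: the set of entries of the `i`-th descent block of `π`. -/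
def DB (m : ℕ) (π : Equiv.Perm (Fin m)) (i : ℕ) : Finset (Fin m) :=
  Finset.univ.filter fun x => blockIdx m π (((π.symm x : Fin m) : ℕ) + 1) = i

/-- `PP(P,n)`: the set of `P`-partitions (order-reversing maps) with all parts at most `n`,
encoded as functions `Fin m → Fin (n+1)`. -/
noncomputable def PPset (m : ℕ) (P : PartialOrder (Fin m)) (n : ℕ) :
    Finset (Fin m → Fin (n + 1)) :=
  Finset.univ.filter fun σ => ∀ x y : Fin m, P.le x y → σ y ≤ σ x

/-- `|σ| = σ(1) + ⋯ + σ(m)`. -/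
def sizePP (m n : ℕ) (σ : Fin m → Fin (n + 1)) : ℕ := ∑ i : Fin m, (σ i : ℕ)

/-- The `q`-integer `[n]_q` for `n ∈ ℕ`, as an ordinary polynomial in `q`. -/
noncomputable def qIntP (n : ℕ) : Polynomial ℤ := ∑ i ∈ Finset.range n, Polynomial.X ^ i

/-- The `q`-factorial `[n]_q!`. -/
noncomputable def qFact (n : ℕ) : Polynomial ℤ := ∏ i ∈ Finset.Icc 1 n, qIntP i

/-- The dual poset `P̄` : `x ≤_{P̄} y` iff `y ≤_P x`. -/
def dualP (m : ℕ) (P : PartialOrder (Fin m)) : PartialOrder (Fin m) where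
  le x y := P.le y x
  lt x y := P.lt y x
  le_refl x := P.le_refl x
  le_trans a b c h1 h2 := P.le_trans c b a h2 h1
  le_antisymm a b h1 h2 := P.le_antisymm a b h2 h1
  lt_iff_le_not_ge a b := P.lt_iff_le_not_ge b a

/-- The canonical ring map `ℤ[q] → ℚ(q)`. -/
noncomputable def toRF : Polynomial ℤ →+* RatFunc ℚ :=
  (algebraMap (Polynomial ℚ) (RatFunc ℚ)).comp (Polynomial.mapRingHom (Int.castRingHom ℚ))

/-- `W(n·O(P), q) = Σ_σ q^{|σ|}`, the sum being over all order-preserving maps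
`σ : P → {0,…,n}`. -/
noncomputable def Wpoly (m : ℕ) (P : PartialOrder (Fin m)) (n : ℕ) : Polynomial ℤ :=
  ∑ σ ∈ (Finset.univ.filter fun σ : Fin m → Fin (n + 1) =>
      ∀ x y : Fin m, P.le x y → σ x ≤ σ y),
    Polynomial.X ^ (∑ i : Fin m, (σ i : ℕ))

/-- The polynomial `q^{mj - s(s-1)/2} Π_{i=1}^{s-1} (x - [i]_q) Π_{i=1}^{m-s} (q^i x + [i]_q)`. -/
noncomputable def tSummand (m s mj : ℕ) : Polynomial (LaurentPolynomial ℤ) :=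
  Polynomial.C (T ((mj : ℤ) - (s * (s - 1) / 2 : ℕ))) *
    (∏ i ∈ Finset.Icc 1 (s - 1), (Polynomial.X - Polynomial.C (qInt (i : ℤ)))) *
    ∏ i ∈ Finset.Icc 1 (m - s),
      (Polynomial.C (T (i : ℤ)) * Polynomial.X + Polynomial.C (qInt (i : ℤ)))

/-- `t(π,k)`: the coefficient of `x^{k-1}` in
`q^{maj π - s(s-1)/2} Π_{i=1}^{s-1} (x - [i]_q) Π_{i=1}^{m-s} (q^i x + [i]_q)`,
where `s = des π`. -/
noncomputable def tpoly (m : ℕ) (π : Equiv.Perm (Fin m)) (k : ℕ) : LaurentPolynomial ℤ :=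
  (tSummand m (desNum m π) (majIdx m π)).coeff (k - 1)

/-- The polynomial `A(q,x) = Π_{i=1}^m (q^i x + [i]_q)`. -/
noncomputable def Apoly (m : ℕ) : Polynomial (LaurentPolynomial ℤ) :=
  ∏ i ∈ Finset.Icc 1 m,
    (Polynomial.C (T (i : ℤ)) * Polynomial.X + Polynomial.C (qInt (i : ℤ)))

/-- The polynomial `B(q,x) = x Σ_{π ∈ L(P), des π ≥ 1} q^{maj π - s(s-1)/2}
Π_{i=1}^{s-1} (x - [i]_q) Π_{i=1}^{m-s} (q^i x + [i]_q)`, where `s = des π`;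
one has `F_P(q,x) = A(q,x) + B(q,x)`. -/
noncomputable def Bpoly (m : ℕ) (P : PartialOrder (Fin m)) : Polynomial (LaurentPolynomial ℤ) :=
  Polynomial.X *
    ∑ π ∈ Finset.univ.filter (fun π => IsLinExt m P π ∧ 1 ≤ desNum m π),
      tSummand m (desNum m π) (majIdx m π)

noncomputable def ApolyP (m : ℕ) : Polynomial (Polynomial ℤ) :=
  ∏ i ∈ Finset.Icc 1 m, (Polynomial.C (Polynomial.X ^ i) * Polynomial.X + Polynomial.C (qIntP i))

lemma coeff_qIntP (n j : ℕ) : (qIntP n).coeff j = if j < n then 1 else 0 := by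
  simp [qIntP, Polynomial.finset_sum_coeff, Polynomial.coeff_X_pow, Finset.sum_ite_eq,
    Finset.mem_range]

def OkP (f : Polynomial ℤ) (a b : ℕ) : Prop :=
  (∀ i, 0 ≤ f.coeff i) ∧ ∀ i, f.coeff i ≠ 0 → a ≤ i ∧ i ≤ b

def GoodP (f : Polynomial ℤ) (a b : ℕ) : Prop :=
  OkP f a b ∧ 0 < f.coeff a ∧ 0 < f.coeff b

lemma OkP.weaken {f : Polynomial ℤ} {a b a' b' : ℕ} (h : OkP f a b) (ha : a' ≤ a) (hb : b ≤ b') :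
    OkP f a' b' :=
  ⟨h.1, fun i hi => ⟨le_trans ha (h.2 i hi).1, le_trans (h.2 i hi).2 hb⟩⟩

lemma okP_zero (a b : ℕ) : OkP 0 a b := ⟨fun i => by simp, fun i hi => by simp at hi⟩

lemma GoodP.add_okP {f g : Polynomial ℤ} {a b : ℕ} (hf : GoodP f a b) (hg : OkP g a b) :
    GoodP (f + g) a b := by
  refine ⟨⟨fun i => ?_, fun i hi => ?_⟩, ?_, ?_⟩
  · rw [Polynomial.coeff_add]; exact add_nonneg (hf.1.1 i) (hg.1 i)
  · rw [Polynomial.coeff_add] at hi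
    rcases (show f.coeff i ≠ 0 ∨ g.coeff i ≠ 0 by
      by_contra hc; push_neg at hc; simp [hc.1, hc.2] at hi) with h | h
    · exact hf.1.2 i h
    · exact hg.2 i h
  · rw [Polynomial.coeff_add]; have := hg.1 a; linarith [hf.2.1]
  · rw [Polynomial.coeff_add]; have := hg.1 b; linarith [hf.2.2]

lemma GoodP.mul_X_pow {f : Polynomial ℤ} {a b : ℕ} (n : ℕ) (hf : GoodP f a b) :
    GoodP (f * Polynomial.X ^ n) (a + n) (b + n) := by
  have hco : ∀ d, (f * Polynomial.X ^ n).coeff d = if n ≤ d then f.coeff (d - n) else 0 :=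
    fun d => Polynomial.coeff_mul_X_pow' f n d
  refine ⟨⟨fun i => ?_, fun i hi => ?_⟩, ?_, ?_⟩
  · rw [hco]; split
    · exact hf.1.1 _
    · exact le_refl 0
  · rw [hco] at hi
    by_cases h : n ≤ i
    · rw [if_pos h] at hi
      have := hf.1.2 _ hi
      omega
    · rw [if_neg h] at hi; exact absurd rfl hi
  · rw [hco, if_pos (by omega)]
    simpa using hf.2.1
  · rw [hco, if_pos (by omega)]
    simpa using hf.2.2

lemma GoodP.mul_qIntP {f : Polynomial ℤ} {a b n : ℕ} (hn : 1 ≤ n) (hf : GoodP f a b) :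
    GoodP (f * qIntP n) a (b + (n - 1)) := by
  have hnonneg : ∀ i, (0:ℤ) ≤ (qIntP n).coeff i := fun i => by
    rw [coeff_qIntP]; split <;> norm_num
  refine ⟨⟨fun i => ?_, fun i hi => ?_⟩, ?_, ?_⟩
  · rw [Polynomial.coeff_mul]
    exact Finset.sum_nonneg fun x _ => mul_nonneg (hf.1.1 _) (hnonneg _)
  · rw [Polynomial.coeff_mul] at hi
    obtain ⟨x, hx, hxne⟩ := Finset.exists_ne_zero_of_sum_ne_zero hi
    rw [Finset.HasAntidiagonal.mem_antidiagonal] at hx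
    have h1 : f.coeff x.1 ≠ 0 := fun h => by simp [h] at hxne
    have h2 : (qIntP n).coeff x.2 ≠ 0 := fun h => by simp [h] at hxne
    have hb1 := hf.1.2 _ h1
    have hb2 : x.2 < n := by
      by_contra hc
      rw [coeff_qIntP, if_neg (by omega)] at h2
      exact h2 rfl
    omega
  · rw [Polynomial.coeff_mul]
    have hmem : ((a, 0) : ℕ × ℕ) ∈ Finset.HasAntidiagonal.antidiagonal a := by
      simp [Finset.HasAntidiagonal.mem_antidiagonal]
    calc (0:ℤ) < f.coeff a * (qIntP n).coeff 0 := by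
          rw [coeff_qIntP, if_pos (by omega)]; simpa using hf.2.1
      _ ≤ _ := Finset.single_le_sum
          (f := fun x : ℕ × ℕ => f.coeff x.1 * (qIntP n).coeff x.2)
          (fun x _ => mul_nonneg (hf.1.1 _) (hnonneg _)) hmem
  · rw [Polynomial.coeff_mul]
    have hmem : ((b, n - 1) : ℕ × ℕ) ∈ Finset.HasAntidiagonal.antidiagonal (b + (n - 1)) := by
      rw [Finset.HasAntidiagonal.mem_antidiagonal]
    calc (0:ℤ) < f.coeff b * (qIntP n).coeff (n - 1) := by
          rw [coeff_qIntP, if_pos (by omega)]; simpa using hf.2.2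
      _ ≤ _ := Finset.single_le_sum
          (f := fun x : ℕ × ℕ => f.coeff x.1 * (qIntP n).coeff x.2)
          (fun x _ => mul_nonneg (hf.1.1 _) (hnonneg _)) hmem

lemma goodP_one : GoodP 1 0 0 := by
  refine ⟨⟨fun i => ?_, fun i hi => ?_⟩, ?_, ?_⟩
  · rw [Polynomial.coeff_one]; split <;> norm_num
  · rw [Polynomial.coeff_one] at hi
    split at hi
    · omega
    · exact absurd rfl hi
  · simp [Polynomial.coeff_one]
  · simp [Polynomial.coeff_one]

lemma apolyP_spec (m : ℕ) :
    (∀ k ≤ m, GoodP ((ApolyP m).coeff k) (∑ i ∈ range (k + 1), i) ((∑ i ∈ range m, i) + k)) ∧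
      ∀ k, m < k → (ApolyP m).coeff k = 0 := by
  induction m with
  | zero =>
    have h1 : ApolyP 0 = 1 := by
      rw [ApolyP, Finset.Icc_eq_empty (by omega), Finset.prod_empty]
    constructor
    · intro k hk
      interval_cases k
      rw [h1]
      simpa using goodP_one
    · intro k hk
      rw [h1, Polynomial.coeff_one, if_neg (by omega)]
  | succ m ih =>
    have hstep : ApolyP (m + 1) = ApolyP m *
        (Polynomial.C (Polynomial.X ^ (m + 1)) * Polynomial.X +
          Polynomial.C (qIntP (m + 1))) := by
      rw [ApolyP, ApolyP, Finset.prod_Icc_succ_top (by omega)]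
    have hcoeff : ∀ k, (ApolyP (m + 1)).coeff k =
        (if k = 0 then 0 else (ApolyP m).coeff (k - 1) * Polynomial.X ^ (m + 1)) +
          (ApolyP m).coeff k * qIntP (m + 1) := by
      intro k
      rw [hstep, mul_add, Polynomial.coeff_add, ← mul_assoc, Polynomial.coeff_mul_C]
      congr 1
      rcases k with _ | k
      · rw [if_pos rfl, Polynomial.mul_coeff_zero, Polynomial.coeff_X_zero, mul_zero]
      · rw [if_neg (by omega), Polynomial.coeff_mul_X, Polynomial.coeff_mul_C,
          Nat.succ_sub_one]
    constructor
    · intro k hk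
      rw [hcoeff]
      rcases Nat.eq_zero_or_pos k with rfl | hk0
      · rw [if_pos rfl, zero_add]
        have hg := ((ih.1 0 (by omega)).mul_qIntP (show 1 ≤ m + 1 by omega))
        have hb : (∑ i ∈ range m, i) + 0 + (m + 1 - 1) = (∑ i ∈ range (m + 1), i) + 0 := by
          rw [Finset.sum_range_succ]; omega
        rwa [hb] at hg
      · rw [if_neg (by omega)]
        rcases Nat.lt_or_ge k (m + 1) with hkm | hkm
        · have hg2 := ((ih.1 k (by omega)).mul_qIntP (show 1 ≤ m + 1 by omega))
          have hb2 : (∑ i ∈ range m, i) + k + (m + 1 - 1) = (∑ i ∈ range (m + 1), i) + k := by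
            rw [Finset.sum_range_succ]; omega
          rw [hb2] at hg2
          have hg1 := ((ih.1 (k - 1) (by omega)).mul_X_pow (m + 1))
          rw [add_comm]
          refine GoodP.add_okP hg2 (hg1.1.weaken ?_ ?_)
          · have hkk : k - 1 + 1 = k := by omega
            rw [hkk, Finset.sum_range_succ]
            omega
          · rw [Finset.sum_range_succ]
            omega
        · have hkeq : k = m + 1 := by omega
          subst hkeq
          have h0 : (ApolyP m).coeff (m + 1) = 0 := ih.2 _ (by omega)
          rw [h0, zero_mul, add_zero]
          have hg1 := ((ih.1 m (by omega)).mul_X_pow (m + 1))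
          have ha : (∑ i ∈ range (m + 1), i) + (m + 1) = ∑ i ∈ range (m + 1 + 1), i := by
            rw [Finset.sum_range_succ (n := m + 1)]
          have hb : (∑ i ∈ range m, i) + m + (m + 1) = (∑ i ∈ range (m + 1), i) + (m + 1) := by
            rw [Finset.sum_range_succ]
          have hmm : m + 1 - 1 = m := by omega
          rw [ha, hb] at hg1
          rw [hmm]
          exact hg1
    · intro k hk
      rw [hcoeff, if_neg (by omega), ih.2 (k - 1) (by omega), ih.2 k (by omega),
        zero_mul, zero_mul, add_zero]


lemma toLaurent_coeff (p : Polynomial ℤ) (j : ℕ) : (toLaurent p).coeff (j : ℤ) = p.coeff j := by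
  rw [LaurentPolynomial.coeff_toLaurent]
  exact Finsupp.mapDomain_apply Nat.castEmbedding.injective _ j

lemma toLaurent_coeff_neg (p : Polynomial ℤ) (n : ℤ) (hn : n < 0) : (toLaurent p).coeff n = 0 := by
  rw [LaurentPolynomial.coeff_toLaurent, Finsupp.mapDomain_notin_range]
  rintro ⟨j, rfl⟩
  exact absurd hn (not_lt.mpr (show (0:ℤ) ≤ (j:ℤ) by positivity))

lemma toLaurent_qIntP (n : ℕ) : toLaurent (qIntP n) = qInt (n : ℤ) := by
  rw [qIntP, qInt, if_pos (by positivity), map_sum, Int.toNat_natCast]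
  exact Finset.sum_congr rfl fun i _ => Polynomial.toLaurent_X_pow i

lemma apoly_eq (m : ℕ) : Apoly m = (ApolyP m).map toLaurent := by
  rw [Apoly, ApolyP, Polynomial.map_prod]
  refine Finset.prod_congr rfl fun i _ => ?_
  rw [Polynomial.map_add, Polynomial.map_mul, Polynomial.map_C, Polynomial.map_C,
    Polynomial.map_X, Polynomial.toLaurent_X_pow, toLaurent_qIntP]

theorem statement17 (m : ℕ) (hm : 1 ≤ m) (k : ℕ) (hk : k ≤ m) :
    (Apoly m).coeff k ≠ 0 ∧
    IsGreatest {i : ℤ | ((Apoly m).coeff k).coeff i ≠ 0} ((m * (m - 1) / 2 + k : ℕ) : ℤ) ∧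
    IsLeast {i : ℤ | ((Apoly m).coeff k).coeff i ≠ 0} ((k * (k + 1) / 2 : ℕ) : ℤ) := by
  have hg := (apolyP_spec m).1 k hk
  have hc : (Apoly m).coeff k = toLaurent ((ApolyP m).coeff k) := by
    rw [apoly_eq, Polynomial.coeff_map]
  set p := (ApolyP m).coeff k with hp
  have ha : ∑ i ∈ range (k + 1), i = k * (k + 1) / 2 := by
    rw [Finset.sum_range_id]
    congr 1
    rw [Nat.add_sub_cancel, Nat.mul_comm]
  have hb : (∑ i ∈ range m, i) + k = m * (m - 1) / 2 + k := by
    rw [Finset.sum_range_id]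
  rw [ha, hb] at hg
  refine ⟨?_, ⟨?_, ?_⟩, ⟨?_, ?_⟩⟩
  · rw [hc]
    rw [Ne, Polynomial.toLaurent_eq_zero]
    intro h
    rw [h] at hg
    simpa using hg.2.1
  · show ((Apoly m).coeff k).coeff ((m * (m - 1) / 2 + k : ℕ) : ℤ) ≠ 0
    rw [hc, toLaurent_coeff]
    exact ne_of_gt hg.2.2
  · intro i hi
    simp only [Set.mem_setOf_eq] at hi
    rw [hc] at hi
    by_cases h : i < 0
    · rw [toLaurent_coeff_neg p i h] at hi
      exact absurd rfl hi
    · push_neg at h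
      obtain ⟨j, rfl⟩ : ∃ j : ℕ, i = (j : ℤ) := ⟨i.toNat, (Int.toNat_of_nonneg h).symm⟩
      rw [toLaurent_coeff] at hi
      exact_mod_cast (hg.1.2 j hi).2
  · show ((Apoly m).coeff k).coeff ((k * (k + 1) / 2 : ℕ) : ℤ) ≠ 0
    rw [hc, toLaurent_coeff]
    exact ne_of_gt hg.2.1
  · intro i hi
    simp only [Set.mem_setOf_eq] at hi
    rw [hc] at hi
    by_cases h : i < 0
    · rw [toLaurent_coeff_neg p i h] at hi
      exact absurd rfl hi
    · push_neg at h
      obtain ⟨j, rfl⟩ : ∃ j : ℕ, i = (j : ℤ) := ⟨i.toNat, (Int.toNat_of_nonneg h).symm⟩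
      rw [toLaurent_coeff] at hi
      exact_mod_cast (hg.1.2 j hi).1
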